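/- Let (u,v,w) : [0,∞) → ℝ³ be a continuously differentiable solution of the tritrophic ODE system with u(t) ≥ 0, v(t) ≥ 0, w(t) ≥ 0 for all t ≥ 0, let μ₀ = min(μ, ν) and K₀ = K·(α + μ₀)²/(4·α), and set W(t) = u(t) + v(t)/γ + w(t)/(γ·β). Then for every t ≥ 0, W(t) ≤ K₀/μ₀ + W(0)·exp(−μ₀·t); in particular every nonnegative solution is bounded. -/

import Mathlib

set_option maxHeartbeats 1000000 in
/-- Boundedness of nonnegative solutions: if `(u,v,w)` is a continuously differentiable
nonnegative solution of the tritrophic system on `[0,∞)`, then with `μ₀ = min μ ν`,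
`K₀ = K(α+μ₀)²/(4α)` and `W = u + v/γ + w/(γβ)` one has
`W(t) ≤ K₀/μ₀ + W(0)·exp(-μ₀ t)` for all `t ≥ 0`; in particular every nonnegative
solution is bounded. -/
theorem weighted_biomass_bounded
    (α K a b c d γ μ ν β : ℝ)
    (hα : 0 < α) (hK : 0 < K) (ha : 0 < a) (hb : 0 < b) (hc : 0 < c)
    (hd : 0 < d) (hγ : 0 < γ) (hμ : 0 < μ) (hν : 0 < ν) (hβ : 0 < β)
    (u v w : ℝ → ℝ)
    (hu : ∀ t : ℝ, 0 ≤ t →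
      HasDerivAt u (α * u t * (1 - u t / K) - b * u t * v t / (u t + a)) t)
    (hv : ∀ t : ℝ, 0 ≤ t →
      HasDerivAt v (γ * (b * u t * v t / (u t + a)) - c * v t * w t / (v t + d) - μ * v t) t)
    (hw : ∀ t : ℝ, 0 ≤ t →
      HasDerivAt w (β * (c * v t * w t / (v t + d)) - ν * w t) t)
    (hunn : ∀ t : ℝ, 0 ≤ t → 0 ≤ u t)
    (hvnn : ∀ t : ℝ, 0 ≤ t → 0 ≤ v t)
    (hwnn : ∀ t : ℝ, 0 ≤ t → 0 ≤ w t)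
    (μ₀ K₀ : ℝ) (hμ₀ : μ₀ = min μ ν) (hK₀ : K₀ = K * (α + μ₀) ^ 2 / (4 * α))
    (W : ℝ → ℝ) (hW : ∀ t, W t = u t + v t / γ + w t / (γ * β)) :
    ∀ t : ℝ, 0 ≤ t → W t ≤ K₀ / μ₀ + W 0 * Real.exp (-μ₀ * t) := by
  have hμ₀pos : 0 < μ₀ := by rw [hμ₀]; exact lt_min hμ hν
  have hμ₀μ : μ₀ ≤ μ := hμ₀ ▸ min_le_left _ _
  have hμ₀ν : μ₀ ≤ ν := hμ₀ ▸ min_le_right _ _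
  have hK₀nn : 0 ≤ K₀ := by rw [hK₀]; positivity
  set D : ℝ → ℝ := fun t => α * u t * (1 - u t / K) - μ * v t / γ - ν * w t / (γ * β) with hD
  have hWfun : W = fun t => u t + v t / γ + w t / (γ * β) := funext hW
  have hW' : ∀ t : ℝ, 0 ≤ t → HasDerivAt W (D t) t := by
    intro t ht
    have hua : u t + a ≠ 0 := by have := hunn t ht; positivity
    have hvd : v t + d ≠ 0 := by have := hvnn t ht; positivity
    have h1 := ((hu t ht).add ((hv t ht).div_const γ)).add ((hw t ht).div_const (γ * β))
    have hval : α * u t * (1 - u t / K) - b * u t * v t / (u t + a) +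
          (γ * (b * u t * v t / (u t + a)) - c * v t * w t / (v t + d) - μ * v t) / γ +
        (β * (c * v t * w t / (v t + d)) - ν * w t) / (γ * β) = D t := by
      simp only [hD]
      field_simp [hK.ne', hγ.ne', hβ.ne', hua, hvd]
      ring
    rw [hWfun]
    rw [hval] at h1
    exact h1
  -- key differential inequality
  have hkey : ∀ t : ℝ, 0 ≤ t → D t + μ₀ * W t ≤ K₀ := by
    intro t ht
    have hu0 := hunn t ht
    have hv0 := hvnn t ht
    have hw0 := hwnn t ht
    have h1 : (μ₀ - μ) * (v t / γ) ≤ 0 :=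
      mul_nonpos_of_nonpos_of_nonneg (by linarith) (by positivity)
    have h2 : (μ₀ - ν) * (w t / (γ * β)) ≤ 0 :=
      mul_nonpos_of_nonpos_of_nonneg (by linarith) (by positivity)
    have h3 : α * u t * (1 - u t / K) + μ₀ * u t ≤ K₀ := by
      rw [hK₀]
      have hid : K * (α + μ₀) ^ 2 / (4 * α) - (α * u t * (1 - u t / K) + μ₀ * u t)
          = (2 * α * u t - K * (α + μ₀)) ^ 2 / (4 * α * K) := by
        field_simp
        ring
      nlinarith [div_nonneg (sq_nonneg (2 * α * u t - K * (α + μ₀))) (by positivity : (0:ℝ) ≤ 4 * α * K), hid]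
    have hWt : W t = u t + v t / γ + w t / (γ * β) := hW t
    have hDt : D t = α * u t * (1 - u t / K) - μ * (v t / γ) - ν * (w t / (γ * β)) := by
      simp only [hD]; ring
    rw [hDt, hWt]
    nlinarith [h1, h2, h3]
  -- Gronwall via monotonicity
  set f : ℝ → ℝ := fun t => (W t - K₀ / μ₀) * Real.exp (μ₀ * t) with hf
  have hf' : ∀ t : ℝ, 0 ≤ t →
      HasDerivAt f ((D t + μ₀ * W t - K₀) * Real.exp (μ₀ * t)) t := by
    intro t ht
    have he := ((hasDerivAt_id t).const_mul μ₀).exp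
    have hm := (((hW' t ht).sub_const (K₀ / μ₀)).mul he)
    refine hm.congr_deriv ?_
    have hkk : K₀ / μ₀ * μ₀ = K₀ := div_mul_cancel₀ _ hμ₀pos.ne'
    simp only [id]
    linear_combination (-Real.exp (μ₀ * t)) * hkk
  have hanti : AntitoneOn f (Set.Ici (0 : ℝ)) := by
    apply antitoneOn_of_deriv_nonpos (convex_Ici 0)
    · intro t ht
      exact (hf' t ht).continuousAt.continuousWithinAt
    · intro t ht
      rw [interior_Ici] at ht
      exact (hf' t (le_of_lt ht)).differentiableAt.differentiableWithinAt
    · intro t ht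
      rw [interior_Ici] at ht
      rw [(hf' t ht.le).deriv]
      have hk := hkey t ht.le
      exact mul_nonpos_of_nonpos_of_nonneg (by linarith) (Real.exp_pos (μ₀ * t)).le
  intro t ht
  have hft : f t ≤ f 0 := hanti (Set.self_mem_Ici) ht ht
  have hf0 : f 0 = W 0 - K₀ / μ₀ := by simp [hf]
  rw [hf0] at hft
  -- f t = (W t - K₀/μ₀) * exp(μ₀ t)
  have hexp : (0:ℝ) < Real.exp (μ₀ * t) := Real.exp_pos _
  have h5 : (W t - K₀ / μ₀) * Real.exp (μ₀ * t) ≤ W 0 - K₀ / μ₀ := hft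
  have h6 : W t - K₀ / μ₀ ≤ (W 0 - K₀ / μ₀) * Real.exp (-μ₀ * t) := by
    have hinv : Real.exp (-μ₀ * t) = (Real.exp (μ₀ * t))⁻¹ := by
      rw [← Real.exp_neg]; ring_nf
    rw [hinv, le_mul_inv_iff₀ hexp]
    exact h5
  have h7 : 0 < Real.exp (-μ₀ * t) := Real.exp_pos _
  have h8 : Real.exp (-μ₀ * t) ≤ 1 := by
    rw [Real.exp_le_one_iff]
    nlinarith
  have hK₀μ : 0 ≤ K₀ / μ₀ := by positivity
  nlinarith [h6, h7, h8, hK₀μ]
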